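/- arXiv:0906.0510 — 2 statements merged into one kernel-verified Lean document; each statement's English description precedes it below -/
import Mathlib

section
/- Let ξ be a real random variable with mean zero, variance 1, third moment E[ξ³] = α₃, and finite fourth moment E[ξ⁴] = α₄. Then α₄ − α₃² − 1 ≥ 0, with equality if and only if ξ is supported on exactly two points. Conversely, for any real numbers α₃, α₄ with α₄ − α₃² − 1 ≥ 0, there exists a real random variable with mean zero, variance 1, third moment α₃ and fourth moment α₄. -/
set_option maxHeartbeats 1000000

open MeasureTheory

lemma pow_le_bound (k : ℕ) (hk : k ≤ 4) (x : ℝ) : |x| ^ k ≤ x ^ 4 + 1 := by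
  have h4 : |x| ^ 4 = x ^ 4 := by
    rw [← abs_pow]; exact abs_of_nonneg (by positivity)
  rcases le_total (|x|) 1 with h | h
  · have h1 : |x| ^ k ≤ 1 := pow_le_one₀ (abs_nonneg x) h
    nlinarith [pow_nonneg (abs_nonneg x) 4]
  · calc |x| ^ k ≤ |x| ^ 4 := pow_le_pow_right₀ h hk
      _ = x ^ 4 := h4
      _ ≤ x ^ 4 + 1 := by linarith

lemma integrable_pow_of_four (ν : Measure ℝ) [IsProbabilityMeasure ν]
    (h4 : Integrable (fun x => x ^ 4) ν) (k : ℕ) (hk : k ≤ 4) :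
    Integrable (fun x : ℝ => x ^ k) ν := by
  refine Integrable.mono (h4.add (integrable_const 1)) (by fun_prop) ?_
  filter_upwards with x
  have h := pow_le_bound k hk x
  have h0 : (0:ℝ) ≤ x ^ 4 + 1 := by positivity
  simp only [Real.norm_eq_abs, abs_pow] at *
  calc |x| ^ k ≤ x ^ 4 + 1 := h
    _ ≤ |x ^ 4 + 1| := le_abs_self _

lemma part1 (ν : Measure ℝ) (hprob : IsProbabilityMeasure ν)
    (h4 : Integrable (fun x => x ^ 4) ν)
    (hmean : (∫ x, x ∂ν) = 0) (hvar : (∫ x, x ^ 2 ∂ν) = 1) :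
    0 ≤ (∫ x, x ^ 4 ∂ν) - (∫ x, x ^ 3 ∂ν) ^ 2 - 1 ∧
      ((∫ x, x ^ 4 ∂ν) - (∫ x, x ^ 3 ∂ν) ^ 2 - 1 = 0 ↔
        ∃ a b : ℝ, a ≠ b ∧ ν ({a, b}ᶜ) = 0 ∧ ν {a} ≠ 0 ∧ ν {b} ≠ 0) := by
  set c := ∫ x, x ^ 3 ∂ν with hc
  have e1 : Integrable (fun x : ℝ => x ^ 1) ν := integrable_pow_of_four ν h4 1 (by norm_num)
  have e1' : Integrable (fun x : ℝ => x) ν := by simpa using e1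
  have e2 : Integrable (fun x : ℝ => x ^ 2) ν := integrable_pow_of_four ν h4 2 (by norm_num)
  have e3 : Integrable (fun x : ℝ => x ^ 3) ν := integrable_pow_of_four ν h4 3 (by norm_num)
  have hfun : (fun x : ℝ => (x ^ 2 - c * x - 1) ^ 2)
      = fun x => x ^ 4 + ((-(2 * c)) * x ^ 3 + ((c ^ 2 - 2) * x ^ 2 + ((2 * c) * x + 1))) := by
    funext x; ring
  have I3 : Integrable (fun x : ℝ => (-(2 * c)) * x ^ 3) ν := e3.const_mul _
  have I2 : Integrable (fun x : ℝ => (c ^ 2 - 2) * x ^ 2) ν := e2.const_mul _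
  have I1 : Integrable (fun x : ℝ => (2 * c) * x) ν := e1'.const_mul _
  have I0 : Integrable (fun _ : ℝ => (1 : ℝ)) ν := integrable_const 1
  have J1 : Integrable (fun x : ℝ => (2 * c) * x + 1) ν := by exact I1.add I0
  have J2 : Integrable (fun x : ℝ => (c ^ 2 - 2) * x ^ 2 + ((2 * c) * x + 1)) ν := by
    exact I2.add J1
  have J3 : Integrable (fun x : ℝ => (-(2 * c)) * x ^ 3 + ((c ^ 2 - 2) * x ^ 2 + ((2 * c) * x + 1))) ν := by
    exact I3.add J2
  have hgint : Integrable (fun x : ℝ => (x ^ 2 - c * x - 1) ^ 2) ν := by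
    rw [hfun]
    exact h4.add J3
  have hgval : (∫ x, (x ^ 2 - c * x - 1) ^ 2 ∂ν) = (∫ x, x ^ 4 ∂ν) - c ^ 2 - 1 := by
    rw [hfun, integral_add h4 J3, integral_add I3 J2, integral_add I2 J1,
      integral_add I1 I0, integral_const_mul, integral_const_mul, integral_const_mul,
      integral_const, ← hc, hmean, hvar]
    simp [measure_univ]
    ring
  have hnonneg : 0 ≤ ∫ x, (x ^ 2 - c * x - 1) ^ 2 ∂ν :=
    integral_nonneg fun x => sq_nonneg _
  constructor
  · rw [← hgval]; exact hnonneg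
  constructor
  · -- equality implies two-point support
    intro h0
    obtain ⟨a, b, hab, hsum, hprod⟩ : ∃ a b : ℝ, a ≠ b ∧ a + b = c ∧ a * b = -1 := by
      refine ⟨(c + Real.sqrt (c ^ 2 + 4)) / 2, (c - Real.sqrt (c ^ 2 + 4)) / 2, ?_, by ring, ?_⟩
      · have hr : 0 < Real.sqrt (c ^ 2 + 4) := Real.sqrt_pos.mpr (by positivity)
        intro h; rw [div_eq_div_iff (by norm_num) (by norm_num)] at h; nlinarith
      · have hr2 : Real.sqrt (c ^ 2 + 4) ^ 2 = c ^ 2 + 4 := Real.sq_sqrt (by positivity)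
        linear_combination (-(1:ℝ)/4) * hr2
    have hfac : ∀ x : ℝ, x ^ 2 - c * x - 1 = (x - a) * (x - b) := fun x => by
      linear_combination x * hsum - hprod
    have hae : ∀ᵐ x ∂ν, (x ^ 2 - c * x - 1) ^ 2 = 0 := by
      have := (integral_eq_zero_iff_of_nonneg (fun x => sq_nonneg (x ^ 2 - c * x - 1)) hgint).mp
        (by rw [hgval]; linarith)
      filter_upwards [this] with x hx using hx
    have hzero : ∀ x : ℝ, ((x ^ 2 - c * x - 1) ^ 2 = 0) ↔ (x = a ∨ x = b) := by
      intro x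
      rw [hfac x]
      constructor
      · intro h
        rcases mul_eq_zero.mp (pow_eq_zero_iff (n := 2) (by norm_num) |>.mp h) with h | h
        · left; have := sub_eq_zero.mp h; linarith
        · right; have := sub_eq_zero.mp h; linarith
      · rintro (rfl | rfl) <;> simp [sub_self] <;> ring
    have hnull : ν ({a, b}ᶜ) = 0 := by
      refine measure_mono_null (fun x hx => ?_) (ae_iff.mp hae)
      simp only [Set.mem_compl_iff, Set.mem_insert_iff, Set.mem_singleton_iff] at hx
      simp only [Set.mem_setOf_eq, hzero x]
      tauto
    refine ⟨a, b, hab, hnull, ?_, ?_⟩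
    · intro ha0
      have hbc : ν ({b}ᶜ) = 0 := by
        refine measure_mono_null ?_ (measure_union_null hnull ha0)
        intro x hx
        simp only [Set.mem_compl_iff, Set.mem_singleton_iff] at hx
        simp only [Set.mem_union, Set.mem_compl_iff, Set.mem_insert_iff, Set.mem_singleton_iff]
        tauto
      have haeb : ∀ᵐ x ∂ν, x = b := by
        rw [ae_iff]
        exact measure_mono_null (fun x hx => hx) hbc
      have h1 : (∫ x, x ∂ν) = b := by
        rw [integral_congr_ae (g := fun _ => b) (haeb.mono fun x hx => hx)]
        simp [measure_univ]
      have h2 : (∫ x, x ^ 2 ∂ν) = b ^ 2 := by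
        rw [integral_congr_ae (g := fun _ => b ^ 2) (haeb.mono fun x hx => by rw [hx])]
        simp [measure_univ]
      rw [hmean] at h1; rw [hvar] at h2
      nlinarith
    · intro hb0
      have hac : ν ({a}ᶜ) = 0 := by
        refine measure_mono_null ?_ (measure_union_null hnull hb0)
        intro x hx
        simp only [Set.mem_compl_iff, Set.mem_singleton_iff] at hx
        simp only [Set.mem_union, Set.mem_compl_iff, Set.mem_insert_iff, Set.mem_singleton_iff]
        tauto
      have haea : ∀ᵐ x ∂ν, x = a := by
        rw [ae_iff]
        exact measure_mono_null (fun x hx => hx) hac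
      have h1 : (∫ x, x ∂ν) = a := by
        rw [integral_congr_ae (g := fun _ => a) (haea.mono fun x hx => hx)]
        simp [measure_univ]
      have h2 : (∫ x, x ^ 2 ∂ν) = a ^ 2 := by
        rw [integral_congr_ae (g := fun _ => a ^ 2) (haea.mono fun x hx => by rw [hx])]
        simp [measure_univ]
      rw [hmean] at h1; rw [hvar] at h2
      nlinarith
  · -- two-point support implies equality
    rintro ⟨a, b, hab, hnull, hA, hB⟩
    set p := (ν {a}).toReal with hpdef
    set q := (ν {b}).toReal with hqdef
    have hpq : p + q = 1 := by
      have hdisj : Disjoint ({a} : Set ℝ) {b} := by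
        simp [Set.disjoint_singleton, hab]
      have hu : ν ({a, b} : Set ℝ) = ν {a} + ν {b} := by
        rw [Set.insert_eq]
        exact measure_union hdisj (measurableSet_singleton b)
      have h1 : ν ({a, b} : Set ℝ) = 1 := by
        have := measure_add_measure_compl (μ := ν) (s := ({a, b} : Set ℝ))
          (by measurability)
        rw [hnull, add_zero, measure_univ] at this
        exact this
      rw [h1] at hu
      rw [hpdef, hqdef, ← ENNReal.toReal_add (measure_ne_top ν _) (measure_ne_top ν _), ← hu]
      simp
    have hmoment : ∀ f : ℝ → ℝ, Measurable f → (∫ x, f x ∂ν) = p * f a + q * f b := by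
      intro f hf
      have haemem : ∀ᵐ x ∂ν, x ∈ ({a, b} : Set ℝ) := by
        rw [ae_iff]
        exact measure_mono_null (fun x hx => hx) hnull
      have hae : ∀ᵐ x ∂ν, f x = Set.indicator {a} (fun _ => f a) x
          + Set.indicator {b} (fun _ => f b) x := by
        filter_upwards [haemem] with x hx
        rcases hx with hx | hx
        · subst hx
          rw [Set.indicator_of_mem (Set.mem_singleton x), Set.indicator_of_notMem (by simpa using hab)]
          simp
        · simp only [Set.mem_singleton_iff] at hx
          subst hx
          rw [Set.indicator_of_notMem (by simpa using hab.symm), Set.indicator_of_mem (Set.mem_singleton x)]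
          simp
      rw [integral_congr_ae hae,
        integral_add ((integrable_const (f a)).indicator (measurableSet_singleton a))
          ((integrable_const (f b)).indicator (measurableSet_singleton b)),
        integral_indicator_const _ (measurableSet_singleton a),
        integral_indicator_const _ (measurableSet_singleton b)]
      simp [hpdef, hqdef, mul_comm, measureReal_def]
    have h1 : p * a + q * b = 0 := by
      have h := hmoment (fun x => x) measurable_id
      rw [hmean] at h; exact h.symm
    have h2 : p * a ^ 2 + q * b ^ 2 = 1 := by
      have h := hmoment (fun x => x ^ 2) (by fun_prop)
      rw [hvar] at h; exact h.symm
    have h3 : c = p * a ^ 3 + q * b ^ 3 := by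
      rw [hc]; exact hmoment (fun x => x ^ 3) (by fun_prop)
    have h4v : (∫ x, x ^ 4 ∂ν) = p * a ^ 4 + q * b ^ 4 := hmoment (fun x => x ^ 4) (by fun_prop)
    have hd : a - b ≠ 0 := sub_ne_zero.mpr hab
    have hpd : p * (a - b) = -b := by linear_combination h1 - b * hpq
    have hqd : q * (a - b) = a := by linear_combination a * hpq - h1
    have h5 : (a - b) * (a * b + 1) = 0 := by
      linear_combination a ^ 2 * hpd + b ^ 2 * hqd - (a - b) * h2
    have habm : a * b = -1 := by
      rcases mul_eq_zero.mp h5 with h | h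
      · exact absurd h hd
      · linarith
    have h3' : p * a ^ 3 + q * b ^ 3 = a + b :=
      mul_left_cancel₀ hd (by linear_combination a ^ 3 * hpd + b ^ 3 * hqd - (a ^ 2 - b ^ 2) * habm)
    have h4' : p * a ^ 4 + q * b ^ 4 = a ^ 2 + a * b + b ^ 2 :=
      mul_left_cancel₀ hd (by linear_combination a ^ 4 * hpd + b ^ 4 * hqd - (a ^ 3 - b ^ 3) * habm)
    rw [h4v, h3, h3', h4']
    linear_combination -habm

lemma integrable_dirac' {f : ℝ → ℝ} (hf : Measurable f) (a : ℝ) :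
    Integrable f (Measure.dirac a) :=
  (integrable_const (f a)).congr (ae_eq_dirac f).symm

lemma tp_integrable (p q θ : ℝ) (A B C : ℝ) {f : ℝ → ℝ} (hf : Measurable f) :
    Integrable f ((ENNReal.ofReal p) • Measure.dirac A + (ENNReal.ofReal q) • Measure.dirac B
      + (ENNReal.ofReal θ) • Measure.dirac C) := by
  refine Integrable.add_measure (Integrable.add_measure ?_ ?_) ?_ <;>
    exact (integrable_dirac' hf _).smul_measure ENNReal.ofReal_ne_top

lemma tp_integral (p q θ : ℝ) (hp : 0 ≤ p) (hq : 0 ≤ q) (hθ : 0 ≤ θ)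
    (A B C : ℝ) {f : ℝ → ℝ} (hf : Measurable f) :
    ∫ x, f x ∂((ENNReal.ofReal p) • Measure.dirac A + (ENNReal.ofReal q) • Measure.dirac B
      + (ENNReal.ofReal θ) • Measure.dirac C) = p * f A + q * f B + θ * f C := by
  rw [integral_add_measure
      (((integrable_dirac' hf _).smul_measure ENNReal.ofReal_ne_top).add_measure
        ((integrable_dirac' hf _).smul_measure ENNReal.ofReal_ne_top))
      ((integrable_dirac' hf _).smul_measure ENNReal.ofReal_ne_top),
    integral_add_measure ((integrable_dirac' hf _).smul_measure ENNReal.ofReal_ne_top)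
      ((integrable_dirac' hf _).smul_measure ENNReal.ofReal_ne_top)]
  simp [integral_smul_measure, integral_dirac, ENNReal.toReal_ofReal, hp, hq, hθ,
    smul_eq_mul]

lemma part2 (α₃ α₄ : ℝ) (hle : 0 ≤ α₄ - α₃ ^ 2 - 1) :
    ∃ ν : Measure ℝ, IsProbabilityMeasure ν ∧ Integrable (fun x => x ^ 4) ν ∧
      (∫ x, x ∂ν) = 0 ∧ (∫ x, x ^ 2 ∂ν) = 1 ∧
      (∫ x, x ^ 3 ∂ν) = α₃ ∧ (∫ x, x ^ 4 ∂ν) = α₄ := by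
  set s : ℝ := α₄ - α₃ ^ 2 with hsdef
  have hs1 : (1 : ℝ) ≤ s := by simp only [hsdef]; linarith
  have hspos : (0 : ℝ) < s := by linarith
  obtain ⟨A, B, p, q, θ, hp, hq, hθ, hpqθ, hm1, hm2, hm3, hm4⟩ :
      ∃ A B p q θ : ℝ, 0 ≤ p ∧ 0 ≤ q ∧ 0 ≤ θ ∧ p + q + θ = 1 ∧
        p * A + q * B + θ * 0 = 0 ∧
        p * A ^ 2 + q * B ^ 2 + θ * 0 ^ 2 = 1 ∧
        p * A ^ 3 + q * B ^ 3 + θ * 0 ^ 3 = α₃ ∧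
        p * A ^ 4 + q * B ^ 4 + θ * 0 ^ 4 = α₄ := by
    have hpos : (0 : ℝ) < α₃ ^ 2 + 4 * s := by nlinarith
    set r : ℝ := Real.sqrt (α₃ ^ 2 + 4 * s) with hrdef
    have hr2 : r ^ 2 = α₃ ^ 2 + 4 * s := Real.sq_sqrt hpos.le
    have hrpos : 0 < r := Real.sqrt_pos.mpr hpos
    set A : ℝ := (α₃ + r) / 2 with hAdef
    set B : ℝ := (α₃ - r) / 2 with hBdef
    have hApos : 0 < A := by
      rw [hAdef]
      nlinarith [hr2, hrpos, hs1]
    have hBneg : B < 0 := by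
      rw [hBdef]
      nlinarith [hr2, hrpos, hs1]
    have hAB : A * B = -s := by
      rw [hAdef, hBdef]
      linear_combination (-(1 : ℝ) / 4) * hr2
    have hABr : A - B = r := by rw [hAdef, hBdef]; ring
    have hABs : A + B = α₃ := by rw [hAdef, hBdef]; ring
    have hAne : A ≠ 0 := ne_of_gt hApos
    have hBne : B ≠ 0 := ne_of_lt hBneg
    have hrne : r ≠ 0 := ne_of_gt hrpos
    have hsne : s ≠ 0 := ne_of_gt hspos
    clear_value A B r s
    have hs' : s = -(A * B) := by linarith [hAB]
    have hr' : r = A - B := hABr.symm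
    have ha3 : α₃ = A + B := hABs.symm
    have ha4 : α₄ = (A + B) ^ 2 - A * B := by
      linear_combination -hsdef + hAB - (A + B + α₃) * hABs
    refine ⟨A, B, -B / (s * r), A / (s * r), 1 - 1 / s, ?_, ?_, ?_, ?_, ?_, ?_, ?_, ?_⟩
    · have hB' : 0 ≤ -B := by linarith
      positivity
    · positivity
    · have : 1 / s ≤ 1 := by
        rw [div_le_one hspos]; exact hs1
      linarith
    · field_simp
      simp only [ha4, ha3, hr', hs']; ring
    · field_simp
      ring
    · field_simp
      simp only [ha4, ha3, hr', hs']; ring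
    · field_simp
      simp only [ha4, ha3, hr', hs']; ring
    · field_simp
      simp only [ha4, ha3, hr', hs']; ring
  refine ⟨(ENNReal.ofReal p) • Measure.dirac A + (ENNReal.ofReal q) • Measure.dirac B
    + (ENNReal.ofReal θ) • Measure.dirac 0, ?_, tp_integrable p q θ A B 0 (by fun_prop), ?_, ?_, ?_, ?_⟩
  · constructor
    rw [Measure.add_apply, Measure.add_apply, Measure.smul_apply, Measure.smul_apply,
      Measure.smul_apply]
    simp only [Measure.dirac_apply_of_mem (Set.mem_univ _), smul_eq_mul, mul_one]
    rw [← ENNReal.ofReal_add hp hq, ← ENNReal.ofReal_add (by linarith) hθ, hpqθ]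
    exact ENNReal.ofReal_one
  · rw [tp_integral p q θ hp hq hθ A B 0 (by fun_prop)]; simpa using hm1
  · rw [tp_integral p q θ hp hq hθ A B 0 (by fun_prop)]; simpa using hm2
  · rw [tp_integral p q θ hp hq hθ A B 0 (by fun_prop)]; simpa using hm3
  · rw [tp_integral p q θ hp hq hθ A B 0 (by fun_prop)]; simpa using hm4

/-- **The truncated moment matching problem** (Lemma 1.27 of Tao-Vu): if `ξ` is a real random
variable (with law `ν`) with mean zero, variance `1`, third moment `α₃` and finite fourth
moment `α₄`, then `α₄ - α₃² - 1 ≥ 0`, with equality iff `ξ` is supported on exactly two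
points.  Conversely, any `(α₃, α₄)` with `α₄ - α₃² - 1 ≥ 0` arises as the third and fourth
moments of a real random variable of mean zero and variance `1`. -/
theorem truncated_moment_problem :
    (∀ ν : Measure ℝ, IsProbabilityMeasure ν →
      Integrable (fun x => x ^ 4) ν →
      (∫ x, x ∂ν) = 0 → (∫ x, x ^ 2 ∂ν) = 1 →
      0 ≤ (∫ x, x ^ 4 ∂ν) - (∫ x, x ^ 3 ∂ν) ^ 2 - 1 ∧
      ((∫ x, x ^ 4 ∂ν) - (∫ x, x ^ 3 ∂ν) ^ 2 - 1 = 0 ↔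
        ∃ a b : ℝ, a ≠ b ∧ ν ({a, b}ᶜ) = 0 ∧ ν {a} ≠ 0 ∧ ν {b} ≠ 0)) ∧
    (∀ α₃ α₄ : ℝ, 0 ≤ α₄ - α₃ ^ 2 - 1 →
      ∃ ν : Measure ℝ, IsProbabilityMeasure ν ∧ Integrable (fun x => x ^ 4) ν ∧
        (∫ x, x ∂ν) = 0 ∧ (∫ x, x ^ 2 ∂ν) = 1 ∧
        (∫ x, x ^ 3 ∂ν) = α₃ ∧ (∫ x, x ^ 4 ∂ν) = α₄) := by
  exact ⟨fun ν hprob h4 hmean hvar => part1 ν hprob h4 hmean hvar, part2⟩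
end

section
/- Let A_n be an n×n Hermitian matrix of block form A_n = [[a, X*],[X, A_{n−1}]] for some a ∈ ℝ and X ∈ ℂ^{n−1}, where A_{n−1} is the bottom right (n−1)×(n−1) Hermitian block. Let (x, v) with x ∈ ℂ and v ∈ ℂ^{n−1} be a unit eigenvector of A_n with eigenvalue λ_i(A_n), and suppose that none of the eigenvalues of A_{n−1} equal λ_i(A_n). Then |x|² = 1 / (1 + Σ_{j=1}^{n−1} (λ_j(A_{n−1}) − λ_i(A_n))^{−2} |u_j(A_{n−1})* X|²), where u_j(A_{n−1}) is a unit eigenvector of A_{n−1} for the eigenvalue λ_j(A_{n−1}) and the u_j form an orthonormal basis. -/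
/-- Sorted (increasing) eigenvalues of a Hermitian matrix (junk value `0` otherwise). -/
noncomputable def eig {n : ℕ} (A : Matrix (Fin n) (Fin n) ℂ) : Fin n → ℝ :=
  if h : A.IsHermitian then h.eigenvalues ∘ Tuple.sort h.eigenvalues else 0

/-- **Formula for the first coordinate of an eigenvector** (Lemma 2.4 of Tao-Vu, after
Erdős-Schlein-Yau): let `A = [[a, X*], [X, B]]` be an `(n+1) × (n+1)` Hermitian matrix with
`a ∈ ℝ`, `X ∈ ℂⁿ`, and `B` Hermitian of size `n`.  Let `(x, v)` be a unit eigenvector of `A`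
with eigenvalue `λ_i(A)`, and suppose no eigenvalue of `B` equals `λ_i(A)`.  If `u₁, …, uₙ`
is an orthonormal basis of eigenvectors of `B`, then
`|x|² = 1 / (1 + Σⱼ (λⱼ(B) - λᵢ(A))⁻² |uⱼ* X|²)`. -/
theorem eigenvector_first_coordinate
    (n : ℕ) (A : Matrix (Fin (n + 1)) (Fin (n + 1)) ℂ) (hA : A.IsHermitian)
    (a : ℝ) (X : Fin n → ℂ) (B : Matrix (Fin n) (Fin n) ℂ)
    (ha : A 0 0 = (a : ℂ))
    (hcol : ∀ j : Fin n, A j.succ 0 = X j)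
    (hrow : ∀ j : Fin n, A 0 j.succ = (starRingEnd ℂ) (X j))
    (hB : ∀ j k : Fin n, A j.succ k.succ = B j k)
    (i : Fin (n + 1)) (w : Fin (n + 1) → ℂ)
    (hw : A.mulVec w = (eig A i : ℂ) • w)
    (hunit : (∑ k, ‖w k‖ ^ 2) = 1)
    (hsep : ∀ j : Fin n, eig B j ≠ eig A i)
    (u : Fin n → (Fin n → ℂ))
    (hu : ∀ j, B.mulVec (u j) = (eig B j : ℂ) • u j)
    (hON : ∀ j j' : Fin n,
      (∑ k, (starRingEnd ℂ) (u j k) * u j' k) = if j = j' then 1 else 0) :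
    ‖w 0‖ ^ 2 =
      1 / (1 + ∑ j, ((eig B j - eig A i) ^ 2)⁻¹ *
        ‖∑ k, (starRingEnd ℂ) (u j k) * X k‖ ^ 2) := by
  classical
  set lam : ℝ := eig A i with hlam
  set x : ℂ := w 0 with hx
  set v : Fin n → ℂ := fun j => w j.succ with hv
  -- B is "Hermitian" pointwise
  have hBsymm : ∀ k m : Fin n, (starRingEnd ℂ) (B k m) = B m k := by
    intro k m
    rw [← hB k m, ← hB m k]
    have := congrFun (congrFun hA m.succ) k.succ
    simpa [Matrix.conjTranspose_apply] using this
  -- eigenvalue equation for the tail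
  have hBv : ∀ j : Fin n, B.mulVec v j = (lam : ℂ) * v j - x * X j := by
    intro j
    have h1 := congrFun hw j.succ
    rw [Matrix.mulVec, dotProduct, Fin.sum_univ_succ] at h1
    simp only [hcol, hB, Pi.smul_apply, smul_eq_mul] at h1
    rw [Matrix.mulVec, dotProduct]
    rw [show (∑ k, B j k * v k) = (X j * w 0 + ∑ k, B j k * w k.succ) - X j * w 0 by
      simp [hv]]
    rw [h1]
    ring
  set d : Fin n → ℂ := fun j => ∑ k, (starRingEnd ℂ) (u j k) * X k with hd
  set c : Fin n → ℂ := fun j => ∑ k, (starRingEnd ℂ) (u j k) * v k with hc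
  -- coefficient formula
  have hcoef : ∀ j : Fin n, ((eig B j : ℂ) - lam) * c j = - (x * d j) := by
    intro j
    have key : ∀ m : Fin n, (∑ k, (starRingEnd ℂ) (u j k) * B k m)
        = (eig B j : ℂ) * (starRingEnd ℂ) (u j m) := by
      intro m
      have h2 : (∑ k, (starRingEnd ℂ) (u j k) * B k m)
          = (starRingEnd ℂ) (∑ k, B m k * u j k) := by
        rw [map_sum]
        refine Finset.sum_congr rfl fun k _ => ?_
        rw [map_mul, hBsymm]
        ring
      rw [h2, show (∑ k, B m k * u j k) = B.mulVec (u j) m from rfl, hu j]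
      simp
    have e1 : (∑ k, (starRingEnd ℂ) (u j k) * (B.mulVec v k)) = (eig B j : ℂ) * c j := by
      calc (∑ k, (starRingEnd ℂ) (u j k) * (B.mulVec v k))
          = ∑ k, ∑ m, (starRingEnd ℂ) (u j k) * (B k m * v m) := by
            refine Finset.sum_congr rfl fun k _ => ?_
            rw [Matrix.mulVec, dotProduct, Finset.mul_sum]
        _ = ∑ m, (∑ k, (starRingEnd ℂ) (u j k) * B k m) * v m := by
            rw [Finset.sum_comm]
            refine Finset.sum_congr rfl fun m _ => ?_
            rw [Finset.sum_mul]
            refine Finset.sum_congr rfl fun k _ => by ring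
        _ = ∑ m, ((eig B j : ℂ) * (starRingEnd ℂ) (u j m)) * v m := by
            refine Finset.sum_congr rfl fun m _ => by rw [key m]
        _ = (eig B j : ℂ) * c j := by
            rw [hc, Finset.mul_sum]
            refine Finset.sum_congr rfl fun m _ => by ring
    have e2 : (∑ k, (starRingEnd ℂ) (u j k) * (B.mulVec v k))
        = (lam : ℂ) * c j - x * d j := by
      calc (∑ k, (starRingEnd ℂ) (u j k) * (B.mulVec v k))
          = ∑ k, ((lam : ℂ) * ((starRingEnd ℂ) (u j k) * v k)
              - x * ((starRingEnd ℂ) (u j k) * X k)) := by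
            refine Finset.sum_congr rfl fun k _ => ?_
            rw [hBv k]; ring
        _ = (lam : ℂ) * c j - x * d j := by
            rw [Finset.sum_sub_distrib, ← Finset.mul_sum, ← Finset.mul_sum, hc, hd]
    rw [e1] at e2
    linear_combination e2
  -- completeness of the orthonormal family
  have hUU : ∀ k k' : Fin n, (∑ j, u j k * (starRingEnd ℂ) (u j k')) = if k = k' then 1 else 0 := by
    set U : Matrix (Fin n) (Fin n) ℂ := Matrix.of fun k j => u j k with hU
    have h1 : U.conjTranspose * U = 1 := by
      ext j j'
      rw [Matrix.mul_apply]
      simp only [Matrix.conjTranspose_apply, hU, Matrix.of_apply, Matrix.one_apply, Complex.star_def]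
      exact hON j j'
    have h2 : U * U.conjTranspose = 1 := mul_eq_one_comm.mp h1
    intro k k'
    have := congrFun (congrFun h2 k) k'
    rw [Matrix.mul_apply] at this
    simpa only [Matrix.conjTranspose_apply, hU, Matrix.of_apply, Matrix.one_apply,
      Complex.star_def] using this
  -- Parseval
  have hPar : (∑ k, (starRingEnd ℂ) (v k) * v k) = ∑ j, (starRingEnd ℂ) (c j) * c j := by
    symm
    calc (∑ j, (starRingEnd ℂ) (c j) * c j)
        = ∑ j, ∑ k, ∑ k', (u j k * (starRingEnd ℂ) (u j k')) * ((starRingEnd ℂ) (v k) * v k') := by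
          refine Finset.sum_congr rfl fun j _ => ?_
          rw [hc, map_sum, Finset.sum_mul]
          refine Finset.sum_congr rfl fun k _ => ?_
          rw [Finset.mul_sum]
          refine Finset.sum_congr rfl fun k' _ => ?_
          simp only [map_mul, RingHomCompTriple.comp_apply, RingHom.id_apply,
            Complex.conj_conj]
          ring
      _ = ∑ k, ∑ k', (∑ j, u j k * (starRingEnd ℂ) (u j k')) * ((starRingEnd ℂ) (v k) * v k') := by
          rw [Finset.sum_comm]
          refine Finset.sum_congr rfl fun k _ => ?_
          rw [Finset.sum_comm]
          refine Finset.sum_congr rfl fun k' _ => ?_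
          rw [Finset.sum_mul]
      _ = ∑ k, (starRingEnd ℂ) (v k) * v k := by
          refine Finset.sum_congr rfl fun k _ => ?_
          rw [Finset.sum_eq_single k]
          · rw [hUU k k]; simp
          · intro k' _ hk'
            rw [hUU k k', if_neg (Ne.symm hk')]; ring
          · simp
  -- pass to real norms
  have hnormsum : ∀ (m : ℕ) (f : Fin m → ℂ),
      (∑ k, (starRingEnd ℂ) (f k) * f k) = ((∑ k, ‖f k‖ ^ 2 : ℝ) : ℂ) := by
    intro m f
    rw [Complex.ofReal_sum]
    refine Finset.sum_congr rfl fun k _ => ?_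
    rw [Complex.normSq_eq_conj_mul_self.symm, ← Complex.normSq_eq_norm_sq]
  have hvc : (∑ k, ‖v k‖ ^ 2) = ∑ j, ‖c j‖ ^ 2 := by
    have := hPar
    rw [hnormsum n v, hnormsum n c] at this
    exact_mod_cast this
  -- compute ‖c j‖²
  have hcval : ∀ j : Fin n, ‖c j‖ ^ 2
      = ‖x‖ ^ 2 * (((eig B j - lam) ^ 2)⁻¹ * ‖d j‖ ^ 2) := by
    intro j
    have hne : ((eig B j : ℂ) - lam) ≠ 0 := by
      intro h
      apply hsep j
      have : ((eig B j : ℂ)) = (lam : ℂ) := by linear_combination h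
      exact_mod_cast this
    have hcj : c j = - (x * d j) / ((eig B j : ℂ) - lam) := by
      field_simp
      linear_combination hcoef j
    rw [hcj]
    rw [norm_div, norm_neg, norm_mul]
    have hden : ‖((eig B j : ℂ) - lam)‖ ^ 2 = (eig B j - lam) ^ 2 := by
      rw [show ((eig B j : ℂ) - lam) = ((eig B j - lam : ℝ) : ℂ) by push_cast; ring,
        Complex.norm_real, Real.norm_eq_abs, sq_abs]
    rw [div_pow, mul_pow, hden]
    rw [show ‖d j‖ = ‖d j‖ from rfl]
    field_simp
  -- put it together
  have hsplit : ‖x‖ ^ 2 + (∑ j, ‖v j‖ ^ 2) = 1 := by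
    rw [← hunit, Fin.sum_univ_succ]
  set S : ℝ := ∑ j, ((eig B j - lam) ^ 2)⁻¹ * ‖d j‖ ^ 2 with hS
  have hSnn : 0 ≤ S := by
    apply Finset.sum_nonneg
    intro j _
    positivity
  have hmain : ‖x‖ ^ 2 * (1 + S) = 1 := by
    have : (∑ j, ‖v j‖ ^ 2) = ‖x‖ ^ 2 * S := by
      rw [hvc, hS, Finset.mul_sum]
      exact Finset.sum_congr rfl fun j _ => hcval j
    rw [this] at hsplit
    linarith [hsplit]
  rw [eq_div_iff (by positivity : (1 : ℝ) + S ≠ 0)]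
  exact hmain
end
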